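/- Let σ : A → M_m(A) be an invertible algebra homomorphism with inverse φ = σ^{-1}, and let P be a free left A-module of finite rank. Then the φ-twisted left A-module ^φ(P^{⊕m}) (with action a * x = φ(a) · x entrywise) is again a free left A-module. -/

import Mathlib

/-!
Statement 8: for `σ : A → M_m(A)` invertible with inverse `φ`, the `φ`-twisted
module `^φ(P^{⊕m})` of a finite free module `P` is again free.
-/

noncomputable section

variable {k : Type*} [Field k]
variable {A : Type*} [Ring A] [Algebra k A]
variable {m : ℕ}

/-- The `φ`-twisted module structure on `Fin m → P`. -/
def twistedModule (φ : A →ₐ[k] Matrix (Fin m) (Fin m) A)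
    (P : Type*) [AddCommGroup P] [Module A P] : Module A (Fin m → P) where
  smul a x := fun j => ∑ i, φ a j i • x i
  one_smul x := by
    funext j
    show (∑ i, φ 1 j i • x i) = x j
    simp [Matrix.one_apply]
  mul_smul a b x := by
    funext j
    show (∑ i, φ (a * b) j i • x i) = ∑ t, φ a j t • ∑ i, φ b t i • x i
    simp only [map_mul, Matrix.mul_apply, Finset.sum_smul, Finset.smul_sum, smul_smul]
    rw [Finset.sum_comm]
  smul_zero a := by
    funext j
    show (∑ i, φ a j i • (0 : P)) = 0
    simp
  smul_add a x y := by
    funext j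
    show (∑ i, φ a j i • (x i + y i)) = (∑ i, φ a j i • x i) + ∑ i, φ a j i • y i
    simp [smul_add, Finset.sum_add_distrib]
  add_smul a b x := by
    funext j
    show (∑ i, φ (a + b) j i • x i) = (∑ i, φ a j i • x i) + ∑ i, φ b j i • x i
    simp [map_add, Matrix.add_apply, add_smul, Finset.sum_add_distrib]
  zero_smul x := by
    funext j
    show (∑ i, φ (0 : A) j i • x i) = 0
    simp

/-- `φ` is an inverse of `σ : A → M_m(A)`. -/
def IsMatInverse (σ φ : A →ₐ[k] Matrix (Fin m) (Fin m) A) : Prop :=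
  (∀ (a : A) (i j : Fin m), (∑ t, φ (σ a i t) j t) = if i = j then a else 0) ∧
  (∀ (a : A) (i j : Fin m), (∑ t, σ (φ a t i) t j) = if i = j then a else 0)

/-- If `σ` is invertible with inverse `φ` and `P` is a free left
`A`-module of finite rank, then the `φ`-twisted module `^φ(P^{⊕m})`, with action
`(a * x)_j = Σ_i φ_{ji}(a) • x_i`, is again a free left `A`-module. -/
theorem twisted_free_module_free (σ φ : A →ₐ[k] Matrix (Fin m) (Fin m) A)
    (hinv : IsMatInverse σ φ)
    (P : Type*) [AddCommGroup P] [Module A P] [Module.Free A P] [Module.Finite A P] :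
    ∃ inst : Module A (Fin m → P),
      (∀ (a : A) (x : Fin m → P),
        inst.toDistribMulAction.toMulAction.toSMul.smul a x
          = fun j => ∑ i, φ a j i • x i) ∧
      @Module.Free A (Fin m → P) _ _ inst := by
  refine ⟨twistedModule φ P, fun a x => rfl, ?_⟩
  letI inst := twistedModule φ P
  set ι := Module.Free.ChooseBasisIndex A P with hι
  let b : Module.Basis ι A P := Module.Free.chooseBasis A P
  let E : P ≃ₗ[A] (ι → A) := b.equivFun
  -- forward map from the standard free module to the twisted module
  have hFsmul : ∀ (a : A) (c : ι → Fin m → A) (i : Fin m),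
      E.symm (fun kk => ∑ j, φ ((a • c) kk j) i j)
        = ∑ t, φ a i t • E.symm (fun kk => ∑ j, φ (c kk j) t j) := by
    intro a c i
    simp only [← map_smul, ← map_sum]
    congr 1
    funext kk
    simp only [Pi.smul_apply, smul_eq_mul, Finset.sum_apply, map_mul, Matrix.mul_apply,
      Finset.mul_sum, Finset.sum_mul]
    rw [Finset.sum_comm]
  let F : (ι → Fin m → A) ≃ₗ[A] (Fin m → P) :=
    { toFun := fun c i => E.symm (fun kk => ∑ j, φ (c kk j) i j)
      invFun := fun x kk j => ∑ i, σ (E (x i) kk) i j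
      map_add' := by
        intro c d
        funext i
        show E.symm (fun kk => ∑ j, φ ((c + d) kk j) i j)
          = E.symm (fun kk => ∑ j, φ (c kk j) i j) + E.symm (fun kk => ∑ j, φ (d kk j) i j)
        rw [← map_add]
        congr 1
        funext kk
        simp [Finset.sum_add_distrib]
      map_smul' := by
        intro a c
        funext i
        exact hFsmul a c i
      left_inv := by
        intro c
        funext kk j
        simp only [LinearEquiv.apply_symm_apply, map_sum, Matrix.sum_apply]
        rw [Finset.sum_comm]
        simp [hinv.2]
      right_inv := by
        intro x
        funext i
        show E.symm (fun kk => ∑ j, φ (∑ t, σ (E (x t) kk) t j) i j) = x i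
        have h : (fun kk => ∑ j, φ (∑ t, σ (E (x t) kk) t j) i j) = E (x i) := by
          funext kk
          simp only [map_sum, Matrix.sum_apply]
          rw [Finset.sum_comm]
          simp [hinv.1]
        rw [h, LinearEquiv.symm_apply_apply] }
  exact Module.Free.of_equiv F
end
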